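/- Let B be a real s×d matrix, T a real d×t matrix, ε ≥ 0, and k an integer with 0 ≤ k ≤ s. Suppose that for every s×s orthogonal projection matrix Q with rank(Q) ≤ k it holds that ‖(I−Q)B‖_F² ≤ ‖(I−Q)BT‖_F² ≤ (1+ε)‖(I−Q)B‖_F². Then res_k(B)² ≤ res_k(BT)² ≤ (1+ε)·res_k(B)². (This is the row-space version of Lemma 3.5, obtained by applying it to Tᵀ and Bᵀ, used in the proof of the paper's bilinear-sketch upper bound.) -/

import Mathlib

/-- Squared Frobenius norm of a real matrix. -/
noncomputable def frobSq {n d : ℕ} (M : Matrix (Fin n) (Fin d) ℝ) : ℝ :=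
  ∑ i, ∑ j, (M i j) ^ 2

/-- An orthogonal projection matrix: symmetric and idempotent. -/
def IsOrthProj {d : ℕ} (P : Matrix (Fin d) (Fin d) ℝ) : Prop :=
  P.transpose = P ∧ P * P = P

/-- Squared rank-`k` residual error: infimum of `‖M - B‖_F²` over matrices `B` of rank `≤ k`. -/
noncomputable def resSq {n d : ℕ} (k : ℕ) (M : Matrix (Fin n) (Fin d) ℝ) : ℝ :=
  sInf {x : ℝ | ∃ B : Matrix (Fin n) (Fin d) ℝ, B.rank ≤ k ∧ x = frobSq (M - B)}

open Matrix

lemma frobSq_nonneg {n d : ℕ} (M : Matrix (Fin n) (Fin d) ℝ) : 0 ≤ frobSq M :=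
  Finset.sum_nonneg fun _ _ => Finset.sum_nonneg fun _ _ => sq_nonneg _

lemma frobSq_col {n d : ℕ} (M : Matrix (Fin n) (Fin d) ℝ) :
    frobSq M = ∑ j, ∑ i, (M i j) ^ 2 := Finset.sum_comm

/-- A symmetric idempotent matrix contracts the ℓ² norm of a vector. -/
lemma vec_contract {s : ℕ} (R : Matrix (Fin s) (Fin s) ℝ) (hR : R.transpose = R)
    (hRR : R * R = R) (v : Fin s → ℝ) :
    ∑ i, ((R *ᵥ v) i) ^ 2 ≤ ∑ i, (v i) ^ 2 := by
  set w := R *ᵥ v with hw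
  have hww : ∑ i, (w i) ^ 2 = w ⬝ᵥ v := by
    have h1 : w ⬝ᵥ w = (w ᵥ* R) ⬝ᵥ v := by
      rw [hw, dotProduct_mulVec]
    have h2 : w ᵥ* R = R *ᵥ w := by
      conv_lhs => rw [← hR]
      rw [Matrix.vecMul_transpose]
    have h3 : R *ᵥ w = w := by
      rw [hw, Matrix.mulVec_mulVec, hRR]
    have : w ⬝ᵥ w = w ⬝ᵥ v := by rw [h1, h2, h3]
    simpa [dotProduct, pow_two] using this
  have hcs : (∑ i, w i * v i) ^ 2 ≤ (∑ i, (w i) ^ 2) * (∑ i, (v i) ^ 2) :=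
    Finset.sum_mul_sq_le_sq_mul_sq _ _ _
  have hdot : w ⬝ᵥ v = ∑ i, w i * v i := rfl
  set a := ∑ i, (w i) ^ 2 with ha
  set b := ∑ i, (v i) ^ 2 with hb
  have ha0 : 0 ≤ a := Finset.sum_nonneg fun _ _ => sq_nonneg _
  have hb0 : 0 ≤ b := Finset.sum_nonneg fun _ _ => sq_nonneg _
  have key : a ^ 2 ≤ a * b := by
    calc a ^ 2 = (∑ i, w i * v i) ^ 2 := by rw [hww, hdot]
    _ ≤ a * b := hcs
  rcases eq_or_lt_of_le ha0 with h0 | h0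
  · rw [← h0]; exact hb0
  · have := key
    rw [pow_two] at this
    exact le_of_mul_le_mul_left this h0

/-- A symmetric idempotent matrix contracts the Frobenius norm. -/
lemma frobSq_contract {s d : ℕ} (R : Matrix (Fin s) (Fin s) ℝ) (hR : R.transpose = R)
    (hRR : R * R = R) (M : Matrix (Fin s) (Fin d) ℝ) :
    frobSq (R * M) ≤ frobSq M := by
  rw [frobSq_col, frobSq_col]
  apply Finset.sum_le_sum
  intro j _
  have hcol : ∀ i, (R * M) i j = (R *ᵥ fun l => M l j) i := by
    intro i
    simp [Matrix.mul_apply, Matrix.mulVec, dotProduct]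
  calc ∑ i, ((R * M) i j) ^ 2 = ∑ i, ((R *ᵥ fun l => M l j) i) ^ 2 := by
        apply Finset.sum_congr rfl; intro i _; rw [hcol]
  _ ≤ ∑ i, (M i j) ^ 2 := vec_contract R hR hRR _

lemma mat_eq_of_mulVec {m n : ℕ} (A B : Matrix (Fin m) (Fin n) ℝ)
    (h : ∀ v, A *ᵥ v = B *ᵥ v) : A = B := by
  ext i j
  have := congrFun (h (Pi.single j 1)) i
  simpa using this

/-- The orthogonal projection matrix onto the column span of `C`. -/
noncomputable def projOf {s d : ℕ} (C : Matrix (Fin s) (Fin d) ℝ) :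
    Matrix (Fin s) (Fin s) ℝ :=
  Matrix.toEuclideanLin.symm
    (((LinearMap.range (Matrix.toEuclideanLin C)).subtypeL.comp
      (Submodule.orthogonalProjectionOnto (LinearMap.range (Matrix.toEuclideanLin C)))).toLinearMap)

lemma projOf_spec {s d : ℕ} (C : Matrix (Fin s) (Fin d) ℝ) :
    IsOrthProj (projOf C) ∧ (projOf C).rank ≤ C.rank ∧ projOf C * C = C := by
  set V := LinearMap.range (Matrix.toEuclideanLin C) with hV
  set P : EuclideanSpace ℝ (Fin s) →ₗ[ℝ] EuclideanSpace ℝ (Fin s) :=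
    (V.subtypeL.comp (Submodule.orthogonalProjectionOnto V)).toLinearMap with hP
  have hQP : Matrix.toEuclideanLin (projOf C) = P := by
    rw [projOf, LinearEquiv.apply_symm_apply]
  -- the action of projOf C on vectors
  have hmv : ∀ v : EuclideanSpace ℝ (Fin s), (projOf C) *ᵥ v = P v := by
    intro v
    have := Matrix.toEuclideanLin_apply (projOf C) v
    rw [hQP] at this
    exact (congrArg (WithLp.equiv 2 (Fin s → ℝ)) this).symm
  -- P fixes elements of V
  have hfix : ∀ x : EuclideanSpace ℝ (Fin s), x ∈ V → P x = x := by
    intro x hx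
    exact Submodule.starProjection_eq_self_iff.mpr hx
  have hmemV : ∀ x, P x ∈ V := fun x => SetLike.coe_mem _
  -- symmetric
  have hsym : (projOf C).transpose = projOf C := by
    have hH : (projOf C).IsHermitian := by
      rw [Matrix.isHermitian_iff_isSymmetric, hQP]
      exact Submodule.starProjection_isSymmetric (K := V)
    have := hH.eq
    calc (projOf C).transpose = (projOf C).conjTranspose := by
          ext i j; simp [Matrix.conjTranspose_apply, Matrix.transpose_apply]
    _ = projOf C := hH.eq
  -- idempotent
  have hidem : projOf C * projOf C = projOf C := by
    apply mat_eq_of_mulVec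
    intro v
    rw [← Matrix.mulVec_mulVec, hmv, hmv]
    exact congrArg WithLp.ofLp (hfix _ (hmemV _))
  -- rank
  have hrange : LinearMap.range (projOf C).mulVecLin ≤ LinearMap.range C.mulVecLin := by
    rintro y ⟨v, rfl⟩
    have : (projOf C).mulVecLin v = (P (WithLp.toLp 2 v)).ofLp := hmv (WithLp.toLp 2 v)
    rw [this]
    obtain ⟨w, hw⟩ := hmemV (WithLp.toLp 2 v)
    exact ⟨WithLp.equiv 2 (Fin d → ℝ) w, congrArg (WithLp.equiv 2 (Fin s → ℝ)) hw⟩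
  have hrank : (projOf C).rank ≤ C.rank := Submodule.finrank_mono hrange
  -- fixes C
  have hQC : projOf C * C = C := by
    apply mat_eq_of_mulVec
    intro v
    rw [← Matrix.mulVec_mulVec, hmv]
    have hmem : ((WithLp.equiv 2 (Fin s → ℝ)).symm (C *ᵥ v)) ∈ V :=
      ⟨(WithLp.equiv 2 (Fin d → ℝ)).symm v, rfl⟩
    exact congrArg WithLp.ofLp (hfix _ hmem)
  exact ⟨⟨hsym, hidem⟩, hrank, hQC⟩

section main

variable {s d t : ℕ}

def resSet {n m : ℕ} (k : ℕ) (M : Matrix (Fin n) (Fin m) ℝ) : Set ℝ :=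
  {x : ℝ | ∃ B : Matrix (Fin n) (Fin m) ℝ, B.rank ≤ k ∧ x = frobSq (M - B)}

lemma resSq_eq {n m : ℕ} (k : ℕ) (M : Matrix (Fin n) (Fin m) ℝ) :
    resSq k M = sInf (resSet k M) := rfl

lemma resSet_nonempty {n m : ℕ} (k : ℕ) (M : Matrix (Fin n) (Fin m) ℝ) :
    (resSet k M).Nonempty :=
  ⟨frobSq (M - 0), 0, by simp, rfl⟩

lemma resSet_bddBelow {n m : ℕ} (k : ℕ) (M : Matrix (Fin n) (Fin m) ℝ) :
    BddBelow (resSet k M) :=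
  ⟨0, fun x ⟨_, _, hx⟩ => hx ▸ frobSq_nonneg _⟩

/-- `‖(1-Q)M‖_F²` is attained by some rank-≤k approximation. -/
lemma resSq_le_proj {n m : ℕ} (k : ℕ) (M : Matrix (Fin n) (Fin m) ℝ)
    (Q : Matrix (Fin n) (Fin n) ℝ) (hQ : IsOrthProj Q) (hr : Q.rank ≤ k) :
    resSq k M ≤ frobSq ((1 - Q) * M) := by
  apply csInf_le (resSet_bddBelow k M)
  refine ⟨Q * M, le_trans (Matrix.rank_mul_le_left Q M) hr, ?_⟩
  rw [Matrix.sub_mul, Matrix.one_mul]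

/-- Every rank-≤k approximation is dominated by some projection residual. -/
lemma exists_proj_le {n m : ℕ} (k : ℕ) (M C : Matrix (Fin n) (Fin m) ℝ)
    (hC : C.rank ≤ k) :
    ∃ Q : Matrix (Fin n) (Fin n) ℝ, IsOrthProj Q ∧ Q.rank ≤ k ∧
      frobSq ((1 - Q) * M) ≤ frobSq (M - C) := by
  obtain ⟨⟨hsym, hidem⟩, hrank, hQC⟩ := projOf_spec C
  set Q := projOf C with hQdef
  refine ⟨Q, ⟨hsym, hidem⟩, le_trans hrank hC, ?_⟩
  have hRsym : (1 - Q).transpose = 1 - Q := by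
    rw [Matrix.transpose_sub, Matrix.transpose_one, hsym]
  have hRidem : (1 - Q) * (1 - Q) = 1 - Q := by
    rw [Matrix.mul_sub, Matrix.sub_mul, Matrix.sub_mul, Matrix.one_mul, Matrix.mul_one, hidem]
    noncomm_ring
  have hkey : (1 - Q) * (M - C) = (1 - Q) * M := by
    rw [Matrix.mul_sub, Matrix.sub_mul, Matrix.sub_mul, Matrix.one_mul, hQC]
    simp
  calc frobSq ((1 - Q) * M) = frobSq ((1 - Q) * (M - C)) := by rw [hkey]
  _ ≤ frobSq (M - C) := frobSq_contract _ hRsym hRidem _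

end main

theorem pcp_preserves_residual_rows {s d t : ℕ} (B : Matrix (Fin s) (Fin d) ℝ)
    (T : Matrix (Fin d) (Fin t) ℝ) (ε : ℝ) (hε : 0 ≤ ε) (k : ℕ) (hk : k ≤ s)
    (h : ∀ Q : Matrix (Fin s) (Fin s) ℝ, IsOrthProj Q → Q.rank ≤ k →
      frobSq ((1 - Q) * B) ≤ frobSq ((1 - Q) * (B * T)) ∧
      frobSq ((1 - Q) * (B * T)) ≤ (1 + ε) * frobSq ((1 - Q) * B)) :
    resSq k B ≤ resSq k (B * T) ∧
    resSq k (B * T) ≤ (1 + ε) * resSq k B := by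
  constructor
  · -- resSq k B ≤ resSq k (B * T)
    rw [resSq_eq k (B * T)]
    apply le_csInf (resSet_nonempty k (B * T))
    rintro x ⟨C, hC, rfl⟩
    obtain ⟨Q, hQ, hr, hle⟩ := exists_proj_le k (B * T) C hC
    calc resSq k B ≤ frobSq ((1 - Q) * B) := resSq_le_proj k B Q hQ hr
    _ ≤ frobSq ((1 - Q) * (B * T)) := (h Q hQ hr).1
    _ ≤ frobSq (B * T - C) := hle
  · -- resSq k (B * T) ≤ (1 + ε) * resSq k B
    have hpos : (0 : ℝ) < 1 + ε := by linarith
    have key : ∀ x ∈ resSet k B, resSq k (B * T) ≤ (1 + ε) * x := by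
      rintro x ⟨C, hC, rfl⟩
      obtain ⟨Q, hQ, hr, hle⟩ := exists_proj_le k B C hC
      calc resSq k (B * T) ≤ frobSq ((1 - Q) * (B * T)) := resSq_le_proj k (B * T) Q hQ hr
      _ ≤ (1 + ε) * frobSq ((1 - Q) * B) := (h Q hQ hr).2
      _ ≤ (1 + ε) * frobSq (B - C) := by
          apply mul_le_mul_of_nonneg_left hle (le_of_lt hpos)
    have hlb : resSq k (B * T) / (1 + ε) ≤ resSq k B := by
      rw [resSq_eq k B]
      apply le_csInf (resSet_nonempty k B)
      intro x hx
      rw [div_le_iff₀ hpos]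
      calc resSq k (B * T) ≤ (1 + ε) * x := key x hx
      _ = x * (1 + ε) := by ring
    calc resSq k (B * T) = (resSq k (B * T) / (1 + ε)) * (1 + ε) := by
          field_simp
    _ ≤ resSq k B * (1 + ε) := mul_le_mul_of_nonneg_right hlb (le_of_lt hpos)
    _ = (1 + ε) * resSq k B := by ring
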